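/- Let (a_k) be a sequence in X with d(o, a_k) → ∞ such that the functions ξ_{a_k} converge pointwise on X to a function ξ : X → ℝ. Let p ∈ X, for each k let γ_k be a geodesic from p to a_k, and suppose γ is a geodesic ray from p such that for every s ≥ 0 one has γ_k(s) → γ(s) as k → ∞. Then for every x ∈ X and every s ≥ 0, ξ(x) ≤ ξ(p) + d(x, γ(s)) − s. -/
import Mathlib


open Filter Metric Topology

/-- Lemma 2.1(2): if `ξ` is a horofunction, the pointwise limit of `ξ_{a_k}` with
`d(o, a_k) → ∞`, and `γ` is a geodesic ray from `p` which is the limit of geodesics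
`γ_k` from `p` to `a_k`, then `ξ(x) ≤ ξ(p) + d(x, γ(s)) − s` for all `x` and `s ≥ 0`. -/
theorem xi_le_of_ray {X : Type*} [MetricSpace X] (o : X)
    (a : ℕ → X) (ha : Tendsto (fun k => dist o (a k)) atTop atTop)
    (ξ : X → ℝ)
    (hξ : ∀ z : X, Tendsto (fun k => dist z (a k) - dist o (a k)) atTop (𝓝 (ξ z)))
    (p : X) (γk : ℕ → ℝ → X)
    (hγk0 : ∀ k, γk k 0 = p)
    (hγk1 : ∀ k, γk k (dist p (a k)) = a k)
    (hγkgeo : ∀ k, ∀ s ∈ Set.Icc 0 (dist p (a k)), ∀ t ∈ Set.Icc 0 (dist p (a k)),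
      dist (γk k s) (γk k t) = |s - t|)
    (γ : ℝ → X) (hγ0 : γ 0 = p)
    (hγray : ∀ s t : ℝ, 0 ≤ s → 0 ≤ t → dist (γ s) (γ t) = |s - t|)
    (hconv : ∀ s : ℝ, 0 ≤ s → Tendsto (fun k => γk k s) atTop (𝓝 (γ s))) :
    ∀ x : X, ∀ s : ℝ, 0 ≤ s → ξ x ≤ ξ p + dist x (γ s) - s := by
  intro x s hs
  -- RHS sequence tends to ξ p + dist x (γ s) - s
  have hR : Tendsto (fun k => (dist p (a k) - dist o (a k)) + dist x (γk k s) - s)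
      atTop (𝓝 (ξ p + dist x (γ s) - s)) := by
    exact Tendsto.sub_const
      ((hξ p).add (((continuous_dist.comp (Continuous.prodMk_right x)).tendsto _).comp
        (hconv s hs))) s
  refine le_of_tendsto_of_tendsto (hξ x) hR ?_
  -- eventual inequality: when dist p (a k) ≥ s
  have hev : ∀ᶠ k in atTop, s ≤ dist p (a k) := by
    have h2 : Tendsto (fun k => dist o (a k) - dist o p) atTop atTop :=
      ha.atTop_add tendsto_const_nhds
    filter_upwards [h2.eventually_ge_atTop s] with k hk
    have := dist_triangle o p (a k)
    have : dist o (a k) - dist o p ≤ dist p (a k) := by linarith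
    linarith
  filter_upwards [hev] with k hk
  have hd : dist (γk k s) (a k) = dist p (a k) - s := by
    have := hγkgeo k s ⟨hs, hk⟩ (dist p (a k)) ⟨dist_nonneg, le_refl _⟩
    rw [hγk1] at this
    rw [this, abs_of_nonpos (by linarith)]
    ring
  have htri : dist x (a k) ≤ dist x (γk k s) + dist (γk k s) (a k) := dist_triangle _ _ _
  rw [hd] at htri
  linarith
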